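/- arXiv:1711.10983 — 2 statements merged into one kernel-verified Lean document; each statement's English description precedes it below -/
import Mathlib

section
/- Let C be a collection for a discrete Morse-Bott function f on a finite abstract simplicial complex K. If σ ∈ C is upward noncritical with respect to C, then every face of σ that lies in C is also upward noncritical with respect to C. -/
open Finset

noncomputable section
open scoped Classical

/-- `σ` is a facet of `τ`: `σ ⊆ τ` and `dim σ = dim τ − 1`. -/
def Facet (σ τ : Finset ℕ) : Prop := σ ⊆ τ ∧ σ.card + 1 = τ.card

/-- A finite abstract simplicial complex: a finite family of nonempty finite sets
closed under taking nonempty subsets. -/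
def IsComplex (K : Finset (Finset ℕ)) : Prop :=
  (∀ σ ∈ K, σ.Nonempty) ∧ ∀ σ ∈ K, ∀ ν, ν ⊆ σ → ν.Nonempty → ν ∈ K

/-- The closure of a set of cells: all nonempty subsets of its cells. -/
def closureOf (S : Finset (Finset ℕ)) : Finset (Finset ℕ) :=
  S.biUnion fun σ => σ.powerset.filter fun ν => ν ≠ ∅

/-- The graph on `C` joining two cells whenever their closures intersect is connected. -/
def ConnectedOn (C : Finset (Finset ℕ)) : Prop :=
  ∀ a ∈ C, ∀ b ∈ C,
    Relation.ReflTransGen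
      (fun x y => x ∈ C ∧ y ∈ C ∧ (closureOf {x} ∩ closureOf {y}).Nonempty) a b

/-- A nonempty set of cells of `K`, all with the same `f`-value, whose
closure-intersection graph is connected. -/
def IsPreCollection (K : Finset (Finset ℕ)) (f : Finset ℕ → ℝ) (C : Finset (Finset ℕ)) :
    Prop :=
  C ⊆ K ∧ C.Nonempty ∧ (∀ σ ∈ C, ∀ τ ∈ C, f σ = f τ) ∧ ConnectedOn C

/-- A collection for `f`: a maximal constant-value connected set of cells. -/
def IsCollection (K : Finset (Finset ℕ)) (f : Finset ℕ → ℝ) (C : Finset (Finset ℕ)) :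
    Prop :=
  IsPreCollection K f C ∧ ∀ C', IsPreCollection K f C' → C ⊆ C' → C' = C

/-- `#{τ ∉ C : σ < τ, f(τ) < f(σ)}`. -/
def UpCount (K : Finset (Finset ℕ)) (f : Finset ℕ → ℝ) (C : Finset (Finset ℕ))
    (σ : Finset ℕ) : ℕ :=
  (K.filter fun τ => τ ∉ C ∧ Facet σ τ ∧ f τ < f σ).card

/-- `#{ν ∉ C : ν < σ, f(ν) > f(σ)}`. -/
def DownCount (K : Finset (Finset ℕ)) (f : Finset ℕ → ℝ) (C : Finset (Finset ℕ))
    (σ : Finset ℕ) : ℕ :=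
  (K.filter fun ν => ν ∉ C ∧ Facet ν σ ∧ f σ < f ν).card

/-- A discrete Morse-Bott function on `K`. -/
def IsMorseBott (K : Finset (Finset ℕ)) (f : Finset ℕ → ℝ) : Prop :=
  ∀ C, IsCollection K f C → ∀ σ ∈ C, UpCount K f C σ ≤ 1 ∧ DownCount K f C σ ≤ 1

/-- `σ` is upward noncritical w.r.t. `C`. -/
def UpNoncrit (K : Finset (Finset ℕ)) (f : Finset ℕ → ℝ) (C : Finset (Finset ℕ))
    (σ : Finset ℕ) : Prop :=
  ∃ w ∈ K, w ∉ C ∧ Facet σ w ∧ f w < f σ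

/-- `σ` is downward noncritical w.r.t. `C`. -/
def DownNoncrit (K : Finset (Finset ℕ)) (f : Finset ℕ → ℝ) (C : Finset (Finset ℕ))
    (σ : Finset ℕ) : Prop :=
  ∃ w ∈ K, w ∉ C ∧ Facet w σ ∧ f σ < f w

/-- The reduced collection `C^red`: the cells of `C` that are neither upward nor
downward noncritical w.r.t. `C`. -/
def reducedOf (K : Finset (Finset ℕ)) (f : Finset ℕ → ℝ) (C : Finset (Finset ℕ)) :
    Finset (Finset ℕ) :=
  C.filter fun σ => ¬ UpNoncrit K f C σ ∧ ¬ DownNoncrit K f C σ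

/-- A noncritical pair: a two-element set `{σ, τ}` with `σ < τ` and `f σ ≥ f τ`. -/
def IsNoncritPair (f : Finset ℕ → ℝ) (S : Finset (Finset ℕ)) : Prop :=
  ∃ σ τ, Facet σ τ ∧ f τ ≤ f σ ∧ S = {σ, τ}

/-- A discrete Morse function in Forman's sense. -/
def IsDiscreteMorse (K : Finset (Finset ℕ)) (g : Finset ℕ → ℝ) : Prop :=
  ∀ σ ∈ K, (K.filter fun τ => Facet σ τ ∧ g τ ≤ g σ).card ≤ 1 ∧
    (K.filter fun ν => Facet ν σ ∧ g σ ≤ g ν).card ≤ 1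

/-- A critical cell of `g`. -/
def IsCritical (K : Finset (Finset ℕ)) (g : Finset ℕ → ℝ) (σ : Finset ℕ) : Prop :=
  σ ∈ K ∧ (K.filter fun τ => Facet σ τ ∧ g τ ≤ g σ).card = 0 ∧
    (K.filter fun ν => Facet ν σ ∧ g σ ≤ g ν).card = 0

/-- Every cell of `K` lies in some collection. -/
theorem exists_collection_mem (K : Finset (Finset ℕ)) (f : Finset ℕ → ℝ)
    {η : Finset ℕ} (hη : η ∈ K) : ∃ C', IsCollection K f C' ∧ η ∈ C' := by
  classical
  set F := K.powerset.filter (fun C => IsPreCollection K f C ∧ η ∈ C) with hF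
  have hsing : ({η} : Finset (Finset ℕ)) ∈ F := by
    refine Finset.mem_filter.2 ⟨Finset.mem_powerset.2 (by simpa using hη), ?_, by simp⟩
    refine ⟨by simpa using hη, ⟨η, Finset.mem_singleton_self η⟩, ?_, ?_⟩
    · intro a ha b hb
      simp only [Finset.mem_singleton] at ha hb
      rw [ha, hb]
    · intro a ha b hb
      simp only [Finset.mem_singleton] at ha hb
      rw [ha, hb]
  obtain ⟨Cm, hCmF, hmax⟩ := F.exists_max_image Finset.card ⟨_, hsing⟩
  obtain ⟨-, hCmpre, hηCm⟩ := Finset.mem_filter.1 hCmF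
  refine ⟨Cm, ⟨hCmpre, ?_⟩, hηCm⟩
  intro C' hC'pre hsub
  have hC'F : C' ∈ F := Finset.mem_filter.2
    ⟨Finset.mem_powerset.2 hC'pre.1, hC'pre, hsub hηCm⟩
  exact (Finset.eq_of_subset_of_card_le hsub (hmax _ hC'F)).symm

/-- If `σ ∈ C` is upward noncritical w.r.t. `C`, then every face of `σ`
(a nonempty proper subset of `σ`) that lies in `C` is also upward noncritical w.r.t. `C`. -/
theorem statement2 (K : Finset (Finset ℕ)) (hK : IsComplex K) (f : Finset ℕ → ℝ)
    (hf : IsMorseBott K f) (C : Finset (Finset ℕ)) (hC : IsCollection K f C)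
    (σ : Finset ℕ) (hσ : σ ∈ C) (hup : UpNoncrit K f C σ)
    (ν : Finset ℕ) (hν₁ : ν ⊆ σ) (hν₂ : ν ≠ σ) (hν₃ : ν.Nonempty) (hνC : ν ∈ C) :
    UpNoncrit K f C ν := by
  classical
  obtain ⟨w, hwK, hwC, hfacet, hfw⟩ := hup
  have hfν : f ν = f σ := hC.1.2.2.1 ν hνC σ hσ
  -- constancy of f on C
  have hconstC : ∀ τ ∈ C, f τ = f ν := fun τ hτ => hC.1.2.2.1 τ hτ ν hνC
  set T := K.filter (fun η => ν ⊆ η ∧ ν ≠ η ∧ f η < f ν) with hT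
  have hνσss : ν ⊂ σ := ssubset_of_subset_of_ne hν₁ hν₂
  have hwT : w ∈ T := by
    refine Finset.mem_filter.2 ⟨hwK, hν₁.trans hfacet.1, ?_, by rw [hfν]; exact hfw⟩
    intro h
    have h1 : ν.card < σ.card := Finset.card_lt_card hνσss
    have h2 : σ.card + 1 = w.card := hfacet.2
    rw [h] at h1; omega
  obtain ⟨η, hηT, hmin⟩ := T.exists_min_image Finset.card ⟨w, hwT⟩
  obtain ⟨hηK, hνη, hνne, hfη⟩ := Finset.mem_filter.1 hηT
  have hcard : ν.card < η.card := Finset.card_lt_card (ssubset_of_subset_of_ne hνη hνne)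
  by_cases hc : η.card = ν.card + 1
  · -- η is a cofacet of ν: it is the desired witness
    refine ⟨η, hηK, ?_, ⟨hνη, hc.symm⟩, hfη⟩
    intro hηC
    exact absurd (hconstC η hηC) (ne_of_lt hfη)
  · -- η has two distinct facets containing ν, both with f ≥ f ν > f η
    have hcard2 : ν.card + 2 ≤ η.card := by omega
    have hsd : 1 < (η \ ν).card := by
      rw [Finset.card_sdiff_of_subset hνη]; omega
    obtain ⟨a, ha, b, hb, hab⟩ := Finset.one_lt_card.1 hsd
    obtain ⟨haη, haν⟩ := Finset.mem_sdiff.1 ha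
    obtain ⟨hbη, hbν⟩ := Finset.mem_sdiff.1 hb
    set μ₁ := η.erase a with hμ₁
    set μ₂ := η.erase b with hμ₂
    have hμ₁η : μ₁ ⊆ η := Finset.erase_subset _ _
    have hμ₂η : μ₂ ⊆ η := Finset.erase_subset _ _
    have hνμ₁ : ν ⊆ μ₁ := Finset.subset_erase.2 ⟨hνη, haν⟩
    have hνμ₂ : ν ⊆ μ₂ := Finset.subset_erase.2 ⟨hνη, hbν⟩
    have hcμ₁ : μ₁.card = η.card - 1 := Finset.card_erase_of_mem haη
    have hcμ₂ : μ₂.card = η.card - 1 := Finset.card_erase_of_mem hbη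
    have hμ₁K : μ₁ ∈ K := hK.2 η hηK μ₁ hμ₁η (hν₃.mono hνμ₁)
    have hμ₂K : μ₂ ∈ K := hK.2 η hηK μ₂ hμ₂η (hν₃.mono hνμ₂)
    -- minimality: f μᵢ ≥ f ν
    have key : ∀ μ, μ ∈ K → ν ⊆ μ → μ.card = η.card - 1 → f ν ≤ f μ := by
      intro μ hμK hνμ hcμ
      by_contra hlt
      push_neg at hlt
      have hμT : μ ∈ T := Finset.mem_filter.2 ⟨hμK, hνμ, by
        intro h; rw [← h] at hcμ; omega, hlt⟩
      have := hmin μ hμT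
      omega
    have hf₁ : f ν ≤ f μ₁ := key μ₁ hμ₁K hνμ₁ hcμ₁
    have hf₂ : f ν ≤ f μ₂ := key μ₂ hμ₂K hνμ₂ hcμ₂
    -- the collection of η
    obtain ⟨Cη, hCη, hηCη⟩ := exists_collection_mem K f hηK
    have hdc := (hf Cη hCη η hηCη).2
    exfalso
    have hmem : ∀ μ, μ ∈ K → μ ⊆ η → μ.card = η.card - 1 → f ν ≤ f μ →
        μ ∈ K.filter (fun x => x ∉ Cη ∧ Facet x η ∧ f η < f x) := by
      intro μ hμK hμη hcμ hfμ
      refine Finset.mem_filter.2 ⟨hμK, ?_, ⟨hμη, by omega⟩, lt_of_lt_of_le hfη hfμ⟩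
      intro hμCη
      have heq : f μ = f η := hCη.1.2.2.1 μ hμCη η hηCη
      have : f η < f η := lt_of_lt_of_le hfη (heq ▸ hfμ)
      exact lt_irrefl _ this
    have h₁ := hmem μ₁ hμ₁K hμ₁η hcμ₁ hf₁
    have h₂ := hmem μ₂ hμ₂K hμ₂η hcμ₂ hf₂
    have hμne : μ₁ ≠ μ₂ := by
      intro h
      have hbμ₁ : b ∈ μ₁ := Finset.mem_erase.2 ⟨hab.symm, hbη⟩
      rw [h] at hbμ₁
      exact (Finset.mem_erase.1 hbμ₁).1 rfl
    have hsubset : ({μ₁, μ₂} : Finset (Finset ℕ)) ⊆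
        K.filter (fun x => x ∉ Cη ∧ Facet x η ∧ f η < f x) := by
      intro x hx
      rcases Finset.mem_insert.1 hx with h | h
      · rw [h]; exact h₁
      · rw [Finset.mem_singleton.1 h]; exact h₂
    have h2le : 2 ≤ DownCount K f Cη η := by
      have hcle := Finset.card_le_card hsubset
      rw [Finset.card_pair hμne] at hcle
      exact hcle
    omega
end
end

section
/- Let f be a discrete Morse-Bott function on a finite abstract simplicial complex K, C a collection for f with common f-value v, and C^red its reduced collection. If σ lies in the closure of C^red but not in C^red and f(σ) = v, then σ ∈ C and σ is not downward noncritical with respect to C. -/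
open Finset

noncomputable section
open scoped Classical

lemma exists_collection (K : Finset (Finset ℕ)) (f : Finset ℕ → ℝ)
    {m : Finset ℕ} (hm : m ∈ K) : ∃ D, IsCollection K f D ∧ m ∈ D := by
  classical
  set T := K.powerset.filter (fun D => IsPreCollection K f D ∧ m ∈ D) with hT
  have hmem : ({m} : Finset (Finset ℕ)) ∈ T := by
    simp only [hT, Finset.mem_filter, Finset.mem_powerset]
    refine ⟨by simpa using hm, ⟨by simpa using hm, ⟨m, by simp⟩, ?_, ?_⟩, by simp⟩
    · intro σ hσ τ hτ
      simp only [Finset.mem_singleton] at hσ hτ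
      subst hσ; subst hτ; rfl
    · intro a ha b hb
      simp only [Finset.mem_singleton] at ha hb
      subst ha; subst hb; exact Relation.ReflTransGen.refl
  obtain ⟨D, hD, hmax⟩ := T.exists_max_image Finset.card ⟨_, hmem⟩
  simp only [hT, Finset.mem_filter, Finset.mem_powerset] at hD
  refine ⟨D, ⟨hD.2.1, ?_⟩, hD.2.2⟩
  intro C' hC' hsub
  have hC'T : C' ∈ T := by
    simp only [hT, Finset.mem_filter, Finset.mem_powerset]
    exact ⟨hC'.1, hC', hsub hD.2.2⟩
  exact (Finset.eq_of_subset_of_card_le hsub (hmax _ hC'T)).symm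

/-- If `σ` lies in the closure of `C^red` but not in `C^red` and has the
common value `v` of `C`, then `σ ∈ C` and `σ` is not downward noncritical w.r.t. `C`. -/
theorem statement4 (K : Finset (Finset ℕ)) (hK : IsComplex K) (f : Finset ℕ → ℝ)
    (hf : IsMorseBott K f) (C : Finset (Finset ℕ)) (hC : IsCollection K f C)
    (v : ℝ) (hv : ∀ τ ∈ C, f τ = v)
    (σ : Finset ℕ) (h₁ : σ ∈ closureOf (reducedOf K f C)) (h₂ : σ ∉ reducedOf K f C)
    (h₃ : f σ = v) :
    σ ∈ C ∧ ¬ DownNoncrit K f C σ := by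
  classical
  obtain ⟨τ, hτred, hστ⟩ := Finset.mem_biUnion.mp h₁
  simp only [Finset.mem_filter, Finset.mem_powerset] at hστ
  obtain ⟨hsub, hσne⟩ := hστ
  have hτmem : τ ∈ C ∧ ¬UpNoncrit K f C τ ∧ ¬DownNoncrit K f C τ := by
    simpa [reducedOf] using hτred
  have hτC := hτmem.1
  have hτK : τ ∈ K := hC.1.1 hτC
  have hσK : σ ∈ K := hK.2 τ hτK σ hsub (Finset.nonempty_iff_ne_empty.2 hσne)
  -- edge between σ and any cell containing it
  have hedge : σ ∈ closureOf {σ} ∩ closureOf {τ} := by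
    simp only [Finset.mem_inter, closureOf, Finset.mem_biUnion, Finset.mem_singleton,
      Finset.mem_filter, Finset.mem_powerset]
    exact ⟨⟨σ, rfl, Finset.Subset.refl σ, hσne⟩, ⟨τ, rfl, hsub, hσne⟩⟩
  -- σ ∈ C
  have hpre : IsPreCollection K f (insert σ C) := by
    refine ⟨Finset.insert_subset hσK hC.1.1, ⟨σ, Finset.mem_insert_self _ _⟩, ?_, ?_⟩
    · have hval : ∀ a ∈ insert σ C, f a = v := by
        intro a ha
        rcases Finset.mem_insert.mp ha with h | h
        · subst h; exact h₃
        · exact hv a h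
      intro a ha b hb
      rw [hval a ha, hval b hb]
    · -- connectivity
      have lift : ∀ a ∈ C, ∀ b ∈ C, Relation.ReflTransGen
          (fun x y => x ∈ insert σ C ∧ y ∈ insert σ C ∧
            (closureOf {x} ∩ closureOf {y}).Nonempty) a b := by
        intro a ha b hb
        refine Relation.ReflTransGen.mono ?_ a b (hC.1.2.2.2 a ha b hb)
        intro x y hxy
        exact ⟨Finset.mem_insert_of_mem hxy.1, Finset.mem_insert_of_mem hxy.2.1, hxy.2.2⟩
      have estep : Relation.ReflTransGen
          (fun x y => x ∈ insert σ C ∧ y ∈ insert σ C ∧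
            (closureOf {x} ∩ closureOf {y}).Nonempty) σ τ :=
        Relation.ReflTransGen.single
          ⟨Finset.mem_insert_self _ _, Finset.mem_insert_of_mem hτC, ⟨σ, hedge⟩⟩
      have estep' : Relation.ReflTransGen
          (fun x y => x ∈ insert σ C ∧ y ∈ insert σ C ∧
            (closureOf {x} ∩ closureOf {y}).Nonempty) τ σ :=
        Relation.ReflTransGen.single
          ⟨Finset.mem_insert_of_mem hτC, Finset.mem_insert_self _ _,
            ⟨σ, by rwa [Finset.inter_comm]⟩⟩
      intro a ha b hb
      rcases Finset.mem_insert.mp ha with ha' | ha' <;>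
        rcases Finset.mem_insert.mp hb with hb' | hb'
      · subst ha'; subst hb'; exact Relation.ReflTransGen.refl
      · subst ha'; exact estep.trans (lift τ hτC b hb')
      · subst hb'; exact (lift a ha' τ hτC).trans estep'
      · exact lift a ha' b hb'
  have hσC : σ ∈ C := by
    have heq := hC.2 (insert σ C) hpre (Finset.subset_insert σ C)
    rw [← heq]; exact Finset.mem_insert_self _ _
  refine ⟨hσC, ?_⟩
  rintro ⟨u, huK, huC, ⟨husub, hucard⟩, huf⟩
  have hvu : v < f u := h₃ ▸ huf
  have huτ : u ⊆ τ := husub.trans hsub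
  -- maximal m with u ⊆ m ⊆ τ, v < f m
  set S := τ.powerset.filter (fun w => u ⊆ w ∧ v < f w) with hS
  have huS : u ∈ S := by
    simp only [hS, Finset.mem_filter, Finset.mem_powerset]
    exact ⟨huτ, Finset.Subset.refl u, hvu⟩
  obtain ⟨m, hmS, hmmax⟩ := S.exists_max_image Finset.card ⟨u, huS⟩
  simp only [hS, Finset.mem_filter, Finset.mem_powerset] at hmS
  obtain ⟨hmτ, hum, hvm⟩ := hmS
  have hmne : m.Nonempty := (hK.1 u huK).mono hum
  have hmK : m ∈ K := hK.2 τ hτK m hmτ hmne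
  have hmC : m ∉ C := fun h => absurd (hv m h) (by linarith)
  have hstep : ∀ x ∈ τ \ m, f (insert x m) ≤ v := by
    intro x hx
    by_contra hgt
    push_neg at hgt
    obtain ⟨hxτ, hxm⟩ := Finset.mem_sdiff.mp hx
    have hins : insert x m ∈ S := by
      simp only [hS, Finset.mem_filter, Finset.mem_powerset]
      exact ⟨Finset.insert_subset hxτ hmτ, hum.trans (Finset.subset_insert x m), hgt⟩
    have hle := hmmax _ hins
    rw [Finset.card_insert_of_notMem hxm] at hle
    omega
  have hτv : f τ = v := hv τ hτC
  have hmτne : m ≠ τ := fun h => by rw [h, hτv] at hvm; exact lt_irrefl v hvm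
  have hcard : (τ \ m).card + m.card = τ.card := Finset.card_sdiff_add_card_eq_card hmτ
  have hsne : (τ \ m).Nonempty := by
    rw [Finset.sdiff_nonempty]
    exact fun h => hmτne (Finset.Subset.antisymm hmτ h)
  rcases eq_or_lt_of_le (Finset.one_le_card.mpr hsne) with h1 | h2
  · -- τ \ m has one element: τ is downward noncritical, contradiction
    have hfacet : Facet m τ := ⟨hmτ, by omega⟩
    exact hτmem.2.2 ⟨m, hmK, hmC, hfacet, hτv ▸ hvm⟩
  · -- τ \ m has ≥ 2 elements: UpCount of m in its collection is ≥ 2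
    obtain ⟨x, hx, y, hy, hxy⟩ := Finset.one_lt_card.mp h2
    obtain ⟨hxτ, hxm⟩ := Finset.mem_sdiff.mp hx
    obtain ⟨hyτ, hym⟩ := Finset.mem_sdiff.mp hy
    obtain ⟨D, hDcoll, hmD⟩ := exists_collection K f hmK
    have hDval : ∀ w ∈ D, f w = f m := fun w hw => hDcoll.1.2.2.1 w hw m hmD
    have hmemfilt : ∀ z ∈ τ \ m, insert z m ∈
        K.filter fun w => w ∉ D ∧ Facet m w ∧ f w < f m := by
      intro z hz
      obtain ⟨hzτ, hzm⟩ := Finset.mem_sdiff.mp hz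
      have hzK : insert z m ∈ K :=
        hK.2 τ hτK _ (Finset.insert_subset hzτ hmτ) ⟨z, Finset.mem_insert_self z m⟩
      have hflt : f (insert z m) < f m := lt_of_le_of_lt (hstep z hz) hvm
      refine Finset.mem_filter.mpr ⟨hzK, fun hD => ?_, ⟨Finset.subset_insert z m,
        (Finset.card_insert_of_notMem hzm).symm⟩, hflt⟩
      exact absurd (hDval _ hD) (ne_of_lt hflt)
    have hne : insert x m ≠ insert y m := fun h => by
      have : x ∈ insert y m := h ▸ Finset.mem_insert_self x m
      rcases Finset.mem_insert.mp this with h' | h'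
      · exact hxy h'
      · exact hxm h'
    have h2le : 2 ≤ UpCount K f D m := by
      rw [UpCount]
      have hsub2 : ({insert x m, insert y m} : Finset (Finset ℕ)) ⊆
          K.filter fun w => w ∉ D ∧ Facet m w ∧ f w < f m := by
        intro z hz
        rcases Finset.mem_insert.mp hz with h | h
        · exact h ▸ hmemfilt x hx
        · exact (Finset.mem_singleton.mp h) ▸ hmemfilt y hy
      calc 2 = ({insert x m, insert y m} : Finset (Finset ℕ)).card :=
            (Finset.card_pair hne).symm
        _ ≤ _ := Finset.card_le_card hsub2
    have := (hf D hDcoll m hmD).1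
    omega
end
end
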